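/- arXiv:1501.07686 — 2 statements merged into one kernel-verified Lean document; each statement's English description precedes it below -/
import Mathlib

section
/- Let L1 and L2 be two tree languages over a graded alphabet Σ, and let a and b be two distinct symbols in Σ_0 such that L2 ⊆ T(Σ∖{a}), i.e. the symbol a appears in no tree of L2. Then for every integer n ≥ 0, L1^{n,a} ·_b L2 = (L1 ·_b L2)^{n,a}. -/
attribute [local instance] Classical.propDecidable

/-- Trees over a graded alphabet: symbols `α` with arity function `ar`. -/
inductive GTree (α : Type) (ar : α → ℕ) : Type
  | node (f : α) (children : Fin (ar f) → GTree α ar) : GTree α ar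

namespace GTree

variable {α : Type} {ar : α → ℕ}

/-- The `c`-product of a tree with a tree language. -/
def cprod (c : α) : GTree α ar → Set (GTree α ar) → Set (GTree α ar)
  | node f ch, L =>
    if f = c then L
    else { s | ∃ ch' : Fin (ar f) → GTree α ar,
            s = node f ch' ∧ ∀ i, ch' i ∈ cprod c (ch i) L }

/-- The `c`-product of two tree languages. -/
def lprod (c : α) (L L' : Set (GTree α ar)) : Set (GTree α ar) :=
  ⋃ t ∈ L, cprod c t L'

/-- The single-node tree `c`, for `c` of rank 0. -/
def leaf (c : α) (hc : ar c = 0) : GTree α ar :=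
  node c (fun i => (i.cast hc).elim0)

/-- The iterated `c`-product `L^{n,c}`. -/
def iterProd (c : α) (hc : ar c = 0) (L : Set (GTree α ar)) : ℕ → Set (GTree α ar)
  | 0 => {leaf c hc}
  | n + 1 => iterProd c hc L n ∪ lprod c L (iterProd c hc L n)

/-- The `c`-closure `L^{*_c}`. -/
def closure (c : α) (hc : ar c = 0) (L : Set (GTree α ar)) : Set (GTree α ar) :=
  ⋃ n, iterProd c hc L n

/-- The symbol `a` occurs (appears) in the tree. -/
def occurs (a : α) : GTree α ar → Prop
  | node f ch => f = a ∨ ∃ i, occurs a (ch i)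

end GTree

namespace GTree

variable {α : Type} {ar : α → ℕ}

lemma cprod_root (c f : α) (ch : Fin (ar f) → GTree α ar) (L : Set (GTree α ar)) :
    cprod c (node f ch) L =
      if f = c then L
      else { s | ∃ ch' : Fin (ar f) → GTree α ar,
              s = node f ch' ∧ ∀ i, ch' i ∈ cprod c (ch i) L } := by
  rfl

lemma cprod_of_not_occurs (c : α) (t : GTree α ar) (L : Set (GTree α ar))
    (h : ¬ occurs c t) : cprod c t L = {t} := by
  induction t with
  | node f ch ih =>
    have hf : f ≠ c := fun hf => h (Or.inl hf)
    rw [cprod_root, if_neg hf]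
    ext s
    constructor
    · rintro ⟨ch', rfl, hch'⟩
      have : ∀ i, ch' i = ch i := by
        intro i
        have := ih i (fun ho => h (Or.inr ⟨i, ho⟩))
        have := hch' i
        rw [ih i (fun ho => h (Or.inr ⟨i, ho⟩))] at this
        exact this
      simp [funext this]
    · rintro rfl
      exact ⟨ch, rfl, fun i => by
        rw [ih i (fun ho => h (Or.inr ⟨i, ho⟩))]; rfl⟩

lemma cprod_leaf_ne (c f : α) (hf : ar f = 0) (ch : Fin (ar f) → GTree α ar)
    (L : Set (GTree α ar)) (hne : f ≠ c) : cprod c (node f ch) L = {node f ch} := by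
  rw [cprod_root, if_neg hne]
  ext s
  constructor
  · rintro ⟨ch', rfl, _⟩
    have : ch' = ch := funext fun i => ((i.cast hf).elim0)
    simp [this]
  · rintro rfl
    exact ⟨ch, rfl, fun i => ((i.cast hf).elim0)⟩

lemma lprod_union (c : α) (S T L : Set (GTree α ar)) :
    lprod c (S ∪ T) L = lprod c S L ∪ lprod c T L := by
  simp only [lprod]
  exact Set.biUnion_union S T _

lemma lprod_singleton (c : α) (t : GTree α ar) (L : Set (GTree α ar)) :
    lprod c {t} L = cprod c t L := by
  simp [lprod]

lemma lprod_biUnion (c : α) (L1 : Set (GTree α ar)) (F : GTree α ar → Set (GTree α ar))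
    (L : Set (GTree α ar)) :
    lprod c (⋃ t ∈ L1, F t) L = ⋃ t ∈ L1, lprod c (F t) L := by
  ext s
  simp only [lprod, Set.mem_iUnion]
  constructor
  · rintro ⟨u, ⟨t, ht, hu⟩, hs⟩
    exact ⟨t, ht, u, hu, hs⟩
  · rintro ⟨t, ht, u, hu, hs⟩
    exact ⟨u, ⟨t, ht, hu⟩, hs⟩

lemma key (a b : α) (hab : a ≠ b) (ha : ar a = 0) (hb : ar b = 0)
    (M L2 : Set (GTree α ar)) (h2 : ∀ t ∈ L2, ¬ occurs a t)
    (t : GTree α ar) :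
    lprod b (cprod a t M) L2 = lprod a (cprod b t L2) (lprod b M L2) := by
  induction t with
  | node f ch ih =>
    by_cases hfa : f = a
    · have hfz : ar f = 0 := by rw [hfa]; exact ha
      have hfb : f ≠ b := by rw [hfa]; exact hab
      rw [cprod_root a, if_pos hfa]
      rw [cprod_leaf_ne b f hfz ch L2 hfb]
      rw [lprod_singleton, cprod_root, if_pos hfa]
    · by_cases hfb : f = b
      · have hfz : ar f = 0 := by rw [hfb]; exact hb
        rw [cprod_leaf_ne a f hfz ch M hfa]
        rw [lprod_singleton, cprod_root, if_pos hfb]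
        ext s
        simp only [lprod, Set.mem_iUnion]
        constructor
        · intro hs
          refine ⟨s, hs, ?_⟩
          rw [cprod_of_not_occurs a s _ (h2 s hs)]
          rfl
        · rintro ⟨u, hu, hs⟩
          rw [cprod_of_not_occurs a u _ (h2 u hu), Set.mem_singleton_iff] at hs
          rwa [hs]
      · rw [cprod_root a, if_neg hfa, cprod_root b, if_neg hfb]
        ext s
        simp only [lprod, Set.mem_iUnion, Set.mem_setOf_eq]
        constructor
        · rintro ⟨u, ⟨chu, rfl, hchu⟩, hs⟩
          rw [cprod_root b, if_neg hfb] at hs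
          obtain ⟨chs, rfl, hchs⟩ := hs
          have hmem : ∀ i, chs i ∈ lprod a (cprod b (ch i) L2) (lprod b M L2) := by
            intro i
            rw [← ih i]
            exact Set.mem_biUnion (hchu i) (hchs i)
          choose chv hv1 hv2 using fun i => Set.mem_iUnion₂.mp (hmem i)
          refine ⟨node f chv, ⟨chv, rfl, hv1⟩, ?_⟩
          rw [cprod_root a, if_neg hfa]
          exact ⟨chs, rfl, hv2⟩
        · rintro ⟨v, ⟨chv, rfl, hchv⟩, hs⟩
          rw [cprod_root a, if_neg hfa] at hs
          obtain ⟨chs, rfl, hchs⟩ := hs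
          have hmem : ∀ i, chs i ∈ lprod b (cprod a (ch i) M) L2 := by
            intro i
            rw [ih i]
            exact Set.mem_biUnion (hchv i) (hchs i)
          choose chu hu1 hu2 using fun i => Set.mem_iUnion₂.mp (hmem i)
          refine ⟨node f chu, ⟨chu, rfl, hu1⟩, ?_⟩
          rw [cprod_root b, if_neg hfb]
          exact ⟨chs, rfl, hu2⟩

lemma lprod_lprod (a b : α) (hab : a ≠ b) (ha : ar a = 0) (hb : ar b = 0)
    (L1 M L2 : Set (GTree α ar)) (h2 : ∀ t ∈ L2, ¬ occurs a t) :
    lprod b (lprod a L1 M) L2 = lprod a (lprod b L1 L2) (lprod b M L2) := by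
  rw [show lprod a L1 M = ⋃ t ∈ L1, cprod a t M from rfl, lprod_biUnion]
  have : ∀ t ∈ L1, lprod b (cprod a t M) L2 = lprod a (cprod b t L2) (lprod b M L2) :=
    fun t _ => key a b hab ha hb M L2 h2 t
  calc (⋃ t ∈ L1, lprod b (cprod a t M) L2)
      = ⋃ t ∈ L1, lprod a (cprod b t L2) (lprod b M L2) := by
        exact Set.iUnion₂_congr this
    _ = lprod a (⋃ t ∈ L1, cprod b t L2) (lprod b M L2) := by
        rw [lprod_biUnion]
    _ = lprod a (lprod b L1 L2) (lprod b M L2) := rfl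

end GTree

/-- if `a ≠ b` are rank-0 symbols and `a` appears in no tree of `L2`,
then for every `n`, `L1^{n,a} ·_b L2 = (L1 ·_b L2)^{n,a}`. -/
theorem iterProd_lprod {α : Type} {ar : α → ℕ} (a b : α)
    (ha : ar a = 0) (hb : ar b = 0) (hab : a ≠ b)
    (L1 L2 : Set (GTree α ar)) (h2 : ∀ t ∈ L2, ¬ GTree.occurs a t) :
    ∀ n : ℕ, GTree.lprod b (GTree.iterProd a ha L1 n) L2 =
      GTree.iterProd a ha (GTree.lprod b L1 L2) n := by
  intro n
  induction n with
  | zero =>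
    simp only [GTree.iterProd]
    rw [GTree.lprod_singleton, GTree.leaf,
      GTree.cprod_leaf_ne b a ha _ L2 hab]
  | succ n ihn =>
    simp only [GTree.iterProd]
    rw [GTree.lprod_union, ihn,
      GTree.lprod_lprod a b hab ha hb L1 _ L2 h2, ihn]
end

section
/- (Arden's lemma for trees, fixed-point part.) Let A and B be two tree languages over a graded alphabet Σ and let c be a symbol in Σ_0. Then the language A^{*_c} ·_c B satisfies the equation L = A ·_c L ∪ B, i.e. A ·_c (A^{*_c} ·_c B) ∪ B = A^{*_c} ·_c B. -/
attribute [local instance] Classical.propDecidable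

namespace GTree

variable {α : Type} {ar : α → ℕ}

theorem mem_lprod {c : α} {L L' : Set (GTree α ar)} {s : GTree α ar} :
    s ∈ lprod c L L' ↔ ∃ t ∈ L, s ∈ cprod c t L' := by simp [lprod]

theorem cprod_mono (c : α) (t : GTree α ar) {L L' : Set (GTree α ar)} (h : L ⊆ L') :
    cprod c t L ⊆ cprod c t L' := by
  induction t with
  | node f ch ih =>
    simp only [cprod]
    split_ifs with hf
    · exact h
    · rintro s ⟨ch', rfl, hch⟩
      exact ⟨ch', rfl, fun i => ih i (hch i)⟩

theorem lprod_mono_left (c : α) {L L'' : Set (GTree α ar)} (h : L ⊆ L'')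
    (B : Set (GTree α ar)) : lprod c L B ⊆ lprod c L'' B := by
  intro s hs
  obtain ⟨t, ht, hst⟩ := mem_lprod.1 hs
  exact mem_lprod.2 ⟨t, h ht, hst⟩

theorem lprod_mono_right (c : α) (L : Set (GTree α ar)) {B B' : Set (GTree α ar)}
    (h : B ⊆ B') : lprod c L B ⊆ lprod c L B' := by
  intro s hs
  obtain ⟨t, ht, hst⟩ := mem_lprod.1 hs
  exact mem_lprod.2 ⟨t, ht, cprod_mono c t h hst⟩

theorem cprod_assoc (c : α) (t : GTree α ar) (L L' : Set (GTree α ar)) :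
    cprod c t (lprod c L L') = lprod c (cprod c t L) L' := by
  induction t with
  | node f ch ih =>
    by_cases hf : f = c
    · simp only [cprod, if_pos hf]
    · ext s
      constructor
      · intro hs
        simp only [cprod, if_neg hf, Set.mem_setOf_eq] at hs
        obtain ⟨ch', rfl, hch⟩ := hs
        have h : ∀ i, ∃ u ∈ cprod c (ch i) L, ch' i ∈ cprod c u L' := by
          intro i
          have h2 := hch i
          rw [ih i, mem_lprod] at h2
          exact h2
        choose u hu hu' using h
        refine mem_lprod.2 ⟨node f u, ?_, ?_⟩
        · simp only [cprod, if_neg hf, Set.mem_setOf_eq]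
          exact ⟨u, rfl, hu⟩
        · simp only [cprod, if_neg hf, Set.mem_setOf_eq]
          exact ⟨ch', rfl, hu'⟩
      · intro hs
        obtain ⟨v, hv, hsv⟩ := mem_lprod.1 hs
        simp only [cprod, if_neg hf, Set.mem_setOf_eq] at hv
        obtain ⟨u, rfl, hu⟩ := hv
        simp only [cprod, if_neg hf, Set.mem_setOf_eq] at hsv ⊢
        obtain ⟨ch', rfl, hch'⟩ := hsv
        refine ⟨ch', rfl, fun i => ?_⟩
        rw [ih i, mem_lprod]
        exact ⟨u i, hu i, hch' i⟩

theorem lprod_assoc (c : α) (A L L' : Set (GTree α ar)) :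
    lprod c (lprod c A L) L' = lprod c A (lprod c L L') := by
  ext s
  constructor
  · intro hs
    obtain ⟨u, hu, hsu⟩ := mem_lprod.1 hs
    obtain ⟨t, ht, hut⟩ := mem_lprod.1 hu
    refine mem_lprod.2 ⟨t, ht, ?_⟩
    rw [cprod_assoc]
    exact mem_lprod.2 ⟨u, hut, hsu⟩
  · intro hs
    obtain ⟨t, ht, hst⟩ := mem_lprod.1 hs
    rw [cprod_assoc] at hst
    obtain ⟨u, hu, hsu⟩ := mem_lprod.1 hst
    exact mem_lprod.2 ⟨u, mem_lprod.2 ⟨t, ht, hu⟩, hsu⟩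

theorem cprod_iUnion_le (c : α) (t : GTree α ar) (L : ℕ → Set (GTree α ar))
    (hmono : Monotone L) :
    cprod c t (⋃ n, L n) ⊆ ⋃ n, cprod c t (L n) := by
  induction t with
  | node f ch ih =>
    by_cases hf : f = c
    · simp [cprod, if_pos hf]
    · intro s hs
      simp only [cprod, if_neg hf, Set.mem_setOf_eq] at hs
      obtain ⟨ch', rfl, hch⟩ := hs
      have h : ∀ i, ∃ n, ch' i ∈ cprod c (ch i) (L n) := by
        intro i
        have h2 := ih i (hch i)
        simpa using h2
      choose nf hnf using h
      refine Set.mem_iUnion.2 ⟨Finset.univ.sup nf, ?_⟩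
      simp only [cprod, if_neg hf, Set.mem_setOf_eq]
      exact ⟨ch', rfl, fun i =>
        cprod_mono c (ch i) (hmono (Finset.le_sup (Finset.mem_univ i))) (hnf i)⟩

theorem iterProd_mono (c : α) (hc : ar c = 0) (A : Set (GTree α ar)) :
    Monotone (iterProd c hc A) := by
  apply monotone_nat_of_le_succ
  intro n
  exact Set.subset_union_left

theorem lprod_leaf (c : α) (hc : ar c = 0) (B : Set (GTree α ar)) :
    lprod c ({leaf c hc} : Set (GTree α ar)) B = B := by
  ext s
  simp [mem_lprod, leaf, cprod]

theorem closure_lprod (c : α) (hc : ar c = 0) (A B : Set (GTree α ar)) :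
    lprod c (closure c hc A) B = ⋃ n, lprod c (iterProd c hc A n) B := by
  ext s
  constructor
  · intro hs
    obtain ⟨t, ht, hst⟩ := mem_lprod.1 hs
    obtain ⟨n, ht⟩ := Set.mem_iUnion.1 ht
    exact Set.mem_iUnion.2 ⟨n, mem_lprod.2 ⟨t, ht, hst⟩⟩
  · intro hs
    obtain ⟨n, hs⟩ := Set.mem_iUnion.1 hs
    obtain ⟨t, ht, hst⟩ := mem_lprod.1 hs
    exact mem_lprod.2 ⟨t, Set.mem_iUnion.2 ⟨n, ht⟩, hst⟩

theorem iter_sub (c : α) (hc : ar c = 0) (A B : Set (GTree α ar)) :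
    ∀ n, lprod c (iterProd c hc A n) B ⊆
      lprod c A (lprod c (closure c hc A) B) ∪ B := by
  intro n
  induction n with
  | zero =>
    intro s hs
    simp only [iterProd, lprod_leaf] at hs
    exact Or.inr hs
  | succ n ih =>
    intro s hs
    simp only [iterProd] at hs
    obtain ⟨t, ht, hst⟩ := mem_lprod.1 hs
    rcases ht with ht | ht
    · exact ih (mem_lprod.2 ⟨t, ht, hst⟩)
    · left
      have h1 : s ∈ lprod c (lprod c A (iterProd c hc A n)) B :=
        mem_lprod.2 ⟨t, ht, hst⟩
      rw [lprod_assoc] at h1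
      refine lprod_mono_right c A ?_ h1
      rw [closure_lprod]
      exact fun u hu => Set.mem_iUnion.2 ⟨n, hu⟩

theorem lprod_closure_fixed_sub (c : α) (hc : ar c = 0) (A B : Set (GTree α ar)) :
    lprod c A (lprod c (closure c hc A) B) ⊆ lprod c (closure c hc A) B := by
  intro s hs
  obtain ⟨t, ht, hst⟩ := mem_lprod.1 hs
  rw [closure_lprod] at hst
  have hmono : Monotone (fun n => lprod c (iterProd c hc A n) B) :=
    fun m n h => lprod_mono_left c (iterProd_mono c hc A h) B
  obtain ⟨n, hn⟩ := Set.mem_iUnion.1 (cprod_iUnion_le c t _ hmono hst)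
  rw [closure_lprod]
  refine Set.mem_iUnion.2 ⟨n + 1, ?_⟩
  have h1 : s ∈ lprod c (lprod c A (iterProd c hc A n)) B := by
    rw [lprod_assoc]
    exact mem_lprod.2 ⟨t, ht, hn⟩
  refine lprod_mono_left c ?_ B h1
  simp only [iterProd]
  exact Set.subset_union_right

theorem sub_lprod_closure (c : α) (hc : ar c = 0) (A B : Set (GTree α ar)) :
    B ⊆ lprod c (closure c hc A) B := by
  intro s hs
  rw [closure_lprod]
  refine Set.mem_iUnion.2 ⟨0, ?_⟩
  simpa only [iterProd, lprod_leaf] using hs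

end GTree

/-- Arden's lemma for trees, fixed-point part:
`A ·_c (A^{*_c} ·_c B) ∪ B = A^{*_c} ·_c B`. -/
theorem arden_fixed_point {α : Type} {ar : α → ℕ} (c : α) (hc : ar c = 0)
    (A B : Set (GTree α ar)) :
    GTree.lprod c A (GTree.lprod c (GTree.closure c hc A) B) ∪ B =
      GTree.lprod c (GTree.closure c hc A) B := by
  apply Set.Subset.antisymm
  · rintro s (hs | hs)
    · exact GTree.lprod_closure_fixed_sub c hc A B hs
    · exact GTree.sub_lprod_closure c hc A B hs
  · intro s hs
    rw [GTree.closure_lprod] at hs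
    obtain ⟨n, hn⟩ := Set.mem_iUnion.1 hs
    exact GTree.iter_sub c hc A B n hn
end
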